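/- Let G = (V, E, ends) be a multigraph and let a : V → ℕ. The point (a_v)_{v∈V} ∈ ℝ^V is an extreme point of the score vector polytope P_G if and only if there exist r ≥ 0 and pairwise distinct vertices v_1, …, v_r ∈ V such that a_{v_i} equals the number of edges e ∈ E with ends e = s(v_i, u) for some u ∉ {v_1, …, v_{i−1}} (loops at v_i are counted, once each) for every 1 ≤ i ≤ r, and a_v = 0 for every v ∉ {v_1, …, v_r}. -/

import Mathlib

open Finset

/-- The degree `κ_S` of a subset `S` of vertices of a multigraph `(V, E, ends)`. -/
def multigraphKappa {V E : Type*} [Fintype E] [DecidableEq V]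
    (ends : E → Sym2 V) (S : Finset V) : ℕ :=
  (Finset.univ.filter fun e => ∃ v ∈ S, v ∈ ends e).card

/-- The score vector polytope of a multigraph. -/
def scorePolytope {V E : Type*} [Fintype E] [DecidableEq V]
    (ends : E → Sym2 V) : Set (V → ℝ) :=
  {x | (∀ v : V, 0 ≤ x v) ∧
    ∀ S : Finset V, ∑ v ∈ S, x v ≤ (multigraphKappa ends S : ℝ)}

namespace ScoreAux

variable {V E : Type*} [Fintype V] [Fintype E] [DecidableEq V]

lemma kappa_mono (ends : E → Sym2 V) {S T : Finset V} (h : S ⊆ T) :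
    multigraphKappa ends S ≤ multigraphKappa ends T := by
  apply card_le_card
  intro e he
  rw [mem_filter] at he ⊢
  obtain ⟨he1, v, hv, hve⟩ := he
  exact ⟨he1, v, h hv, hve⟩

lemma kappa_empty (ends : E → Sym2 V) : multigraphKappa ends (∅ : Finset V) = 0 := by
  simp [multigraphKappa]

lemma kappa_submodular (ends : E → Sym2 V) (S T : Finset V) :
    multigraphKappa ends (S ∪ T) + multigraphKappa ends (S ∩ T) ≤
      multigraphKappa ends S + multigraphKappa ends T := by
  classical
  set A := univ.filter fun e : E => ∃ v ∈ S, v ∈ ends e with hA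
  set B := univ.filter fun e : E => ∃ v ∈ T, v ∈ ends e with hB
  have hU : (univ.filter fun e : E => ∃ v ∈ S ∪ T, v ∈ ends e) = A ∪ B := by
    ext e
    simp only [hA, hB, mem_filter, mem_univ, true_and, Finset.mem_union]
    constructor
    · rintro ⟨v, hv, hve⟩
      rcases hv with h | h
      · exact Or.inl ⟨v, h, hve⟩
      · exact Or.inr ⟨v, h, hve⟩
    · rintro (⟨v, hv, hve⟩ | ⟨v, hv, hve⟩)
      · exact ⟨v, Or.inl hv, hve⟩
      · exact ⟨v, Or.inr hv, hve⟩
  have hI : (univ.filter fun e : E => ∃ v ∈ S ∩ T, v ∈ ends e) ⊆ A ∩ B := by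
    intro e he
    rw [mem_filter] at he
    obtain ⟨_, v, hv, hve⟩ := he
    rw [Finset.mem_inter] at hv
    rw [Finset.mem_inter]
    exact ⟨mem_filter.2 ⟨mem_univ _, v, hv.1, hve⟩, mem_filter.2 ⟨mem_univ _, v, hv.2, hve⟩⟩
  calc multigraphKappa ends (S ∪ T) + multigraphKappa ends (S ∩ T)
      ≤ (A ∪ B).card + (A ∩ B).card := by
        unfold multigraphKappa
        exact Nat.add_le_add (le_of_eq (by rw [hU])) (card_le_card hI)
    _ = A.card + B.card := Finset.card_union_add_card_inter A B
    _ = multigraphKappa ends S + multigraphKappa ends T := rfl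

lemma mem_scorePolytope_iff (ends : E → Sym2 V) (a : V → ℕ) :
    (fun v => (a v : ℝ)) ∈ scorePolytope ends ↔
      ∀ S : Finset V, ∑ v ∈ S, a v ≤ multigraphKappa ends S := by
  constructor
  · intro h S
    have := h.2 S
    exact_mod_cast (show ∑ v ∈ S, (a v : ℝ) ≤ (multigraphKappa ends S : ℝ) from this)
  · intro h
    refine ⟨fun v => by positivity, fun S => ?_⟩
    exact (show ∑ v ∈ S, (a v : ℝ) ≤ (multigraphKappa ends S : ℝ) by exact_mod_cast h S)


section Bwd

variable (ends : E → Sym2 V) {r : ℕ} (vs : Fin r → V)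

/-- The set of edges counted for index `i` in the greedy form. -/
noncomputable def Fset (i : Fin r) : Finset E :=
  Finset.univ.filter fun e : E =>
    ∃ u : V, ends e = s(vs i, u) ∧ ∀ j : Fin r, j < i → u ≠ vs j

/-- The set of the first `n` chosen vertices. -/
noncomputable def Wset (n : ℕ) : Finset V :=
  (univ.filter fun j : Fin r => (j : ℕ) < n).image vs

lemma mem_ends_of_mem_Fset {i : Fin r} {e : E} (he : e ∈ Fset ends vs i) :
    vs i ∈ ends e := by
  rw [Fset, mem_filter] at he
  obtain ⟨_, u, hu, _⟩ := he
  rw [hu]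
  exact Sym2.mem_mk_left _ _

lemma Fset_disjoint (hinj : Function.Injective vs) {i j : Fin r} (hij : i ≠ j) :
    Disjoint (Fset ends vs i) (Fset ends vs j) := by
  have key : ∀ i j : Fin r, i < j → Disjoint (Fset ends vs i) (Fset ends vs j) := by
    intro i j hij
    rw [Finset.disjoint_left]
    intro e hei hej
    rw [Fset, mem_filter] at hei hej
    obtain ⟨-, u, hu, hcond⟩ := hei
    obtain ⟨-, u', hu', hcond'⟩ := hej
    rw [hu] at hu'
    rcases Sym2.eq_iff.1 hu' with ⟨h1, _⟩ | ⟨h1, h2⟩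
    · exact absurd (hinj h1) (ne_of_lt hij)
    · exact hcond' i hij h1.symm
  rcases lt_or_gt_of_ne hij with h | h
  · exact key i j h
  · exact (key j i h).symm

lemma sum_Wset {M : Type*} [AddCommMonoid M] (hinj : Function.Injective vs)
    (x : V → M) (n : ℕ) :
    ∑ v ∈ Wset vs n, x v = ∑ j ∈ univ.filter (fun j : Fin r => (j : ℕ) < n), x (vs j) :=
  Finset.sum_image (fun i _ j _ h => hinj h)

lemma kappa_Wset (hinj : Function.Injective vs)
    (a : V → ℕ)
    (hcount : ∀ i : Fin r, a (vs i) = (Fset ends vs i).card) (n : ℕ) :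
    multigraphKappa ends (Wset vs n)
      = ∑ j ∈ univ.filter (fun j : Fin r => (j : ℕ) < n), a (vs j) := by
  classical
  have hset : (univ.filter fun e : E => ∃ v ∈ Wset vs n, v ∈ ends e)
      = (univ.filter fun j : Fin r => (j : ℕ) < n).biUnion (Fset ends vs) := by
    ext e
    simp only [mem_filter, mem_univ, true_and, mem_biUnion]
    constructor
    · rintro ⟨v, hv, hve⟩
      set J := univ.filter (fun j : Fin r => (j : ℕ) < n ∧ vs j ∈ ends e) with hJ
      have hJne : J.Nonempty := by
        rw [Wset, Finset.mem_image] at hv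
        obtain ⟨j, hj, rfl⟩ := hv
        rw [mem_filter] at hj
        exact ⟨j, by simp [hJ, hj.2, hve]⟩
      obtain ⟨j₀, hj₀, hmin⟩ := J.exists_min_image (fun j => j) hJne
      rw [hJ, mem_filter] at hj₀
      obtain ⟨-, hj₀n, hj₀e⟩ := hj₀
      obtain ⟨u, hu⟩ := Sym2.mem_iff_exists.1 hj₀e
      refine ⟨j₀, by simp [hj₀n], ?_⟩
      rw [Fset, mem_filter]
      refine ⟨mem_univ _, u, hu, ?_⟩
      intro k hk hne
      have hke : vs k ∈ ends e := by
        rw [hu, ← hne]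
        exact Sym2.mem_mk_right _ _
      have hkJ : k ∈ J := by
        rw [hJ, mem_filter]
        exact ⟨mem_univ _, lt_trans (by exact_mod_cast hk) hj₀n, hke⟩
      exact absurd hk (not_lt.2 (hmin k hkJ))
    · rintro ⟨j, hj, hje⟩
      refine ⟨vs j, ?_, mem_ends_of_mem_Fset ends vs hje⟩
      rw [Wset, Finset.mem_image]
      exact ⟨j, mem_filter.2 ⟨mem_univ _, hj⟩, rfl⟩
  rw [multigraphKappa, hset,
    card_biUnion (fun i _ j _ hij => Fset_disjoint ends vs hinj hij)]
  exact Finset.sum_congr rfl fun j _ => (hcount j).symm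

lemma memA (hinj : Function.Injective vs) (a : V → ℕ)
    (hcount : ∀ i : Fin r, a (vs i) = (Fset ends vs i).card)
    (hzero : ∀ v : V, (∀ i : Fin r, vs i ≠ v) → a v = 0)
    (S : Finset V) : ∑ v ∈ S, a v ≤ multigraphKappa ends S := by
  classical
  set I := univ.filter (fun j : Fin r => vs j ∈ S) with hI
  have himg : I.image vs = S.filter (fun v => ∃ i : Fin r, vs i = v) := by
    ext v
    simp only [hI, Finset.mem_image, mem_filter, mem_univ, true_and]
    constructor
    · rintro ⟨j, hj, rfl⟩
      exact ⟨hj, j, rfl⟩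
    · rintro ⟨hv, i, rfl⟩
      exact ⟨i, hv, rfl⟩
  have hsplit : ∑ v ∈ S, a v = ∑ j ∈ I, a (vs j) := by
    rw [← Finset.sum_filter_add_sum_filter_not S (fun v => ∃ i : Fin r, vs i = v)]
    have h0 : ∑ v ∈ S.filter (fun v => ¬∃ i : Fin r, vs i = v), a v = 0 := by
      apply Finset.sum_eq_zero
      intro v hv
      rw [mem_filter] at hv
      push_neg at hv
      exact hzero v hv.2
    rw [h0, add_zero, ← himg, Finset.sum_image (fun i _ j _ h => hinj h)]
  rw [hsplit]
  calc ∑ j ∈ I, a (vs j) = ∑ j ∈ I, (Fset ends vs j).card :=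
        Finset.sum_congr rfl fun j _ => hcount j
    _ = (I.biUnion (Fset ends vs)).card :=
        (card_biUnion (fun i _ j _ hij => Fset_disjoint ends vs hinj hij)).symm
    _ ≤ multigraphKappa ends S := by
        rw [multigraphKappa]
        apply card_le_card
        intro e he
        rw [mem_biUnion] at he
        obtain ⟨j, hj, hje⟩ := he
        rw [hI, mem_filter] at hj
        rw [mem_filter]
        exact ⟨mem_univ _, vs j, hj.2, mem_ends_of_mem_Fset ends vs hje⟩

lemma bwd (ends : E → Sym2 V) (a : V → ℕ) {r : ℕ} (vs : Fin r → V)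
    (hinj : Function.Injective vs)
    (hcount : ∀ i : Fin r, a (vs i) = (Fset ends vs i).card)
    (hzero : ∀ v : V, (∀ i : Fin r, vs i ≠ v) → a v = 0) :
    (fun v => (a v : ℝ)) ∈ Set.extremePoints ℝ (scorePolytope ends) := by
  classical
  set c : V → ℝ := fun v =>
    (∑ n ∈ range r, if v ∈ Wset vs (n + 1) then (1 : ℝ) else 0) -
      (if ∀ i : Fin r, vs i ≠ v then 1 else 0) with hc
  set L : (V → ℝ) → ℝ := fun x => ∑ v, c v * x v with hL
  have hL_eq : ∀ x : V → ℝ, L x =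
      (∑ n ∈ range r, ∑ v ∈ Wset vs (n + 1), x v) -
        ∑ v ∈ univ.filter (fun v => ∀ i : Fin r, vs i ≠ v), x v := by
    intro x
    rw [hL]
    simp only [hc, sub_mul, Finset.sum_sub_distrib, Finset.sum_mul, ite_mul, one_mul,
      zero_mul]
    congr 1
    · rw [Finset.sum_comm]
      apply Finset.sum_congr rfl
      intro n _
      rw [Finset.sum_ite_mem, univ_inter]
    · rw [Finset.sum_filter]
  have hL_lin : ∀ (t₁ t₂ : ℝ) (y z : V → ℝ),
      L (t₁ • y + t₂ • z) = t₁ * L y + t₂ * L z := by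
    intro t₁ t₂ y z
    rw [hL]
    simp only [Pi.add_apply, Pi.smul_apply, smul_eq_mul, mul_add, Finset.sum_add_distrib,
      Finset.mul_sum]
    congr 1 <;> (apply Finset.sum_congr rfl; intro v _; ring)
  have hσa : ∀ n : ℕ, ∑ v ∈ Wset vs n, ((a v : ℝ)) = (multigraphKappa ends (Wset vs n) : ℝ) := by
    intro n
    rw [sum_Wset vs hinj, kappa_Wset ends vs hinj a hcount n]
    push_cast
    rfl
  have hLa : L (fun v => (a v : ℝ)) =
      ∑ n ∈ range r, (multigraphKappa ends (Wset vs (n + 1)) : ℝ) := by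
    rw [hL_eq]
    have h0 : ∑ v ∈ univ.filter (fun v => ∀ i : Fin r, vs i ≠ v), ((a v : ℝ)) = 0 := by
      apply Finset.sum_eq_zero
      intro v hv
      rw [mem_filter] at hv
      rw [hzero v hv.2]
      simp
    rw [h0, sub_zero]
    exact Finset.sum_congr rfl fun n _ => hσa (n + 1)
  have hmem : (fun v => (a v : ℝ)) ∈ scorePolytope ends :=
    (mem_scorePolytope_iff ends a).2 (memA ends vs hinj a hcount hzero)
  have hkey : ∀ x ∈ scorePolytope ends, L x ≤ L (fun v => (a v : ℝ)) ∧
      (L x = L (fun v => (a v : ℝ)) → x = fun v => (a v : ℝ)) := by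
    intro x hx
    have hσ : ∀ n : ℕ, ∑ v ∈ Wset vs n, x v ≤ (multigraphKappa ends (Wset vs n) : ℝ) :=
      fun n => hx.2 (Wset vs n)
    have hoff : 0 ≤ ∑ v ∈ univ.filter (fun v => ∀ i : Fin r, vs i ≠ v), x v :=
      Finset.sum_nonneg fun v _ => hx.1 v
    have hsle : ∑ n ∈ range r, ∑ v ∈ Wset vs (n + 1), x v ≤
        ∑ n ∈ range r, (multigraphKappa ends (Wset vs (n + 1)) : ℝ) :=
      Finset.sum_le_sum fun n _ => hσ (n + 1)
    have hle : L x ≤ L (fun v => (a v : ℝ)) := by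
      rw [hL_eq, hLa]
      linarith
    refine ⟨hle, fun heqL => ?_⟩
    rw [hL_eq, hLa] at heqL
    have h1 : ∑ n ∈ range r,
        ((multigraphKappa ends (Wset vs (n + 1)) : ℝ) - ∑ v ∈ Wset vs (n + 1), x v) +
        ∑ v ∈ univ.filter (fun v => ∀ i : Fin r, vs i ≠ v), x v = 0 := by
      rw [Finset.sum_sub_distrib]
      linarith
    have hA : 0 ≤ ∑ n ∈ range r,
        ((multigraphKappa ends (Wset vs (n + 1)) : ℝ) - ∑ v ∈ Wset vs (n + 1), x v) :=
      Finset.sum_nonneg fun n _ => sub_nonneg.2 (hσ (n + 1))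
    have hAz : ∑ n ∈ range r,
        ((multigraphKappa ends (Wset vs (n + 1)) : ℝ) - ∑ v ∈ Wset vs (n + 1), x v) = 0 := by
      linarith
    have hterm1 : ∀ n ∈ range r,
        (multigraphKappa ends (Wset vs (n + 1)) : ℝ) - ∑ v ∈ Wset vs (n + 1), x v = 0 :=
      (Finset.sum_eq_zero_iff_of_nonneg (fun n _ => sub_nonneg.2 (hσ (n + 1)))).1 hAz
    have hBz : ∑ v ∈ univ.filter (fun v => ∀ i : Fin r, vs i ≠ v), x v = 0 := by
      linarith
    have hterm2 : ∀ v ∈ univ.filter (fun v => ∀ i : Fin r, vs i ≠ v), x v = 0 :=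
      (Finset.sum_eq_zero_iff_of_nonneg (fun v _ => hx.1 v)).1 hBz
    have hW0 : Wset vs 0 = (∅ : Finset V) := by
      rw [Wset]
      simp
    have hσeq : ∀ n : ℕ, n ≤ r → ∑ v ∈ Wset vs n, x v =
        (multigraphKappa ends (Wset vs n) : ℝ) := by
      intro n hn
      match n with
      | 0 =>
        rw [hW0, kappa_empty ends]
        simp
      | Nat.succ m =>
        have := hterm1 m (mem_range.2 (by omega))
        linarith
    funext v
    by_cases hv : ∃ i : Fin r, vs i = v
    · obtain ⟨i, rfl⟩ := hv
      have hstep : ∀ y : V → ℝ,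
          ∑ v ∈ Wset vs ((i : ℕ) + 1), y v - ∑ v ∈ Wset vs (i : ℕ), y v = y (vs i) := by
        intro y
        rw [sum_Wset vs hinj, sum_Wset vs hinj]
        have hins : univ.filter (fun j : Fin r => (j : ℕ) < (i : ℕ) + 1) =
            insert i (univ.filter (fun j : Fin r => (j : ℕ) < (i : ℕ))) := by
          ext j
          simp only [mem_filter, mem_univ, true_and, Finset.mem_insert]
          constructor
          · intro h
            rcases Nat.lt_succ_iff_lt_or_eq.1 h with h | h
            · exact Or.inr h
            · exact Or.inl (Fin.ext h)
          · rintro (rfl | h)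
            · omega
            · omega
        rw [hins, Finset.sum_insert (by simp)]
        ring
      have h₁ := hstep x
      have h₂ := hstep (fun v => (a v : ℝ))
      rw [hσeq _ (by omega : (i : ℕ) + 1 ≤ r), hσeq _ (le_of_lt i.isLt)] at h₁
      rw [hσa, hσa] at h₂
      rw [← h₁, ← h₂]
    · push_neg at hv
      have hx0 : x v = 0 := hterm2 v (by simp [hv])
      rw [hx0, hzero v hv]
      simp
  refine ⟨hmem, ?_⟩
  intro y hy z hz hseg
  obtain ⟨t₁, t₂, ht₁, ht₂, hts, heq⟩ := hseg
  have hLy := hkey y hy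
  have hLz := hkey z hz
  have hLeq : t₁ * L y + t₂ * L z = L (fun v => (a v : ℝ)) := by
    rw [← hL_lin t₁ t₂ y z, heq]
  have h1 : t₁ * (L (fun v => (a v : ℝ)) - L y) + t₂ * (L (fun v => (a v : ℝ)) - L z) = 0 := by
    have hring : t₁ * (L (fun v => (a v : ℝ)) - L y) + t₂ * (L (fun v => (a v : ℝ)) - L z) =
        (t₁ + t₂) * L (fun v => (a v : ℝ)) - (t₁ * L y + t₂ * L z) := by ring
    rw [hring, hts, hLeq]
    ring
  have h2 : 0 ≤ t₁ * (L (fun v => (a v : ℝ)) - L y) := mul_nonneg ht₁.le (sub_nonneg.2 hLy.1)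
  have h3 : 0 ≤ t₂ * (L (fun v => (a v : ℝ)) - L z) := mul_nonneg ht₂.le (sub_nonneg.2 hLz.1)
  have hy' : L y = L (fun v => (a v : ℝ)) := by
    rcases mul_eq_zero.1 (by linarith : t₁ * (L (fun v => (a v : ℝ)) - L y) = 0) with h | h
    · exact absurd h (ne_of_gt ht₁)
    · linarith
  have hz' : L z = L (fun v => (a v : ℝ)) := by
    rcases mul_eq_zero.1 (by linarith : t₂ * (L (fun v => (a v : ℝ)) - L z) = 0) with h | h
    · exact absurd h (ne_of_gt ht₂)
    · linarith
  exact hLy.2 hy'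

end Bwd

section Fwd

lemma midpoint_not_extreme (ends : E → Sym2 V) (a : V → ℕ) (y z : V → ℝ)
    (hy : y ∈ scorePolytope ends) (hz : z ∈ scorePolytope ends)
    (hmid : ∀ v, (a v : ℝ) = (y v + z v) / 2)
    (hyne : y ≠ fun v => (a v : ℝ)) :
    (fun v => (a v : ℝ)) ∉ Set.extremePoints ℝ (scorePolytope ends) := by
  intro hext
  have hseg : (fun v => (a v : ℝ)) ∈ openSegment ℝ y z := by
    refine ⟨1/2, 1/2, by norm_num, by norm_num, by norm_num, ?_⟩
    funext v
    simp only [Pi.add_apply, Pi.smul_apply, smul_eq_mul]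
    rw [hmid v]
    ring
  exact hyne (hext.2 hy hz hseg)

lemma sum_indicator (S : Finset V) (u : V) :
    ∑ v ∈ S, (if v = u then (1 : ℝ) else 0) = if u ∈ S then (1 : ℝ) else 0 := by
  rw [Finset.sum_ite_eq' S u (fun _ => (1 : ℝ))]

lemma exists_tight_of_pos (ends : E → Sym2 V) (a : V → ℕ)
    (hext : (fun v => (a v : ℝ)) ∈ Set.extremePoints ℝ (scorePolytope ends))
    {u : V} (hu : 0 < a u) :
    ∃ S : Finset V, u ∈ S ∧ ∑ v ∈ S, a v = multigraphKappa ends S := by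
  by_contra hcon
  push_neg at hcon
  have hmemA := (mem_scorePolytope_iff ends a).1 hext.1
  have hslack : ∀ S : Finset V, u ∈ S → ∑ v ∈ S, a v + 1 ≤ multigraphKappa ends S := by
    intro S hS
    have h1 := hmemA S
    have h2 := hcon S hS
    omega
  set y : V → ℝ := fun v => (a v : ℝ) + (if v = u then 1 else 0) with hy
  set z : V → ℝ := fun v => (a v : ℝ) - (if v = u then 1 else 0) with hz
  have hsy : ∀ S : Finset V, ∑ v ∈ S, y v =
      (∑ v ∈ S, (a v : ℝ)) + (if u ∈ S then (1:ℝ) else 0) := by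
    intro S
    rw [hy]
    rw [Finset.sum_add_distrib, sum_indicator]
  have hsz : ∀ S : Finset V, ∑ v ∈ S, z v =
      (∑ v ∈ S, (a v : ℝ)) - (if u ∈ S then (1:ℝ) else 0) := by
    intro S
    rw [hz]
    rw [Finset.sum_sub_distrib, sum_indicator]
  have hcast : ∀ S : Finset V, ∑ v ∈ S, ((a v : ℝ)) = ((∑ v ∈ S, a v : ℕ) : ℝ) := by
    intro S; push_cast; rfl
  have hyP : y ∈ scorePolytope ends := by
    constructor
    · intro v
      rw [hy]
      have : (0:ℝ) ≤ (a v : ℝ) := by positivity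
      by_cases hv : v = u <;> simp [hv] <;> positivity
    · intro S
      rw [hsy, hcast]
      by_cases hS : u ∈ S
      · rw [if_pos hS]
        have := hslack S hS
        have : ((∑ v ∈ S, a v : ℕ) : ℝ) + 1 ≤ (multigraphKappa ends S : ℝ) := by
          exact_mod_cast this
        linarith
      · rw [if_neg hS, add_zero]
        exact_mod_cast hmemA S
  have hzP : z ∈ scorePolytope ends := by
    constructor
    · intro v
      rw [hz]
      beta_reduce
      by_cases hv : v = u
      · rw [if_pos hv]
        have : (1:ℝ) ≤ (a v : ℝ) := by rw [hv]; exact_mod_cast hu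
        linarith
      · rw [if_neg hv, sub_zero]
        positivity
    · intro S
      rw [hsz, hcast]
      have h1 : ((∑ v ∈ S, a v : ℕ) : ℝ) ≤ (multigraphKappa ends S : ℝ) := by
        exact_mod_cast hmemA S
      by_cases hS : u ∈ S
      · rw [if_pos hS]
        linarith
      · rw [if_neg hS, sub_zero]
        linarith
  have hyne : y ≠ fun v => (a v : ℝ) := by
    intro h
    have := congrFun h u
    rw [hy] at this
    simp at this
  exact midpoint_not_extreme ends a y z hyP hzP
    (fun v => by rw [hy, hz]; ring) hyne hext

lemma tight_inter (ends : E → Sym2 V) (a : V → ℕ)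
    (hmemA : ∀ S : Finset V, ∑ v ∈ S, a v ≤ multigraphKappa ends S)
    {S T : Finset V} (hS : ∑ v ∈ S, a v = multigraphKappa ends S)
    (hT : ∑ v ∈ T, a v = multigraphKappa ends T) :
    ∑ v ∈ (S ∩ T), a v = multigraphKappa ends (S ∩ T) := by
  have hsub := kappa_submodular ends S T
  have h1 := hmemA (S ∪ T)
  have h2 := hmemA (S ∩ T)
  have hmod : ∑ v ∈ S ∪ T, a v + ∑ v ∈ S ∩ T, a v = ∑ v ∈ S, a v + ∑ v ∈ T, a v :=
    Finset.sum_union_inter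
  omega

lemma exists_min_tight (ends : E → Sym2 V) (a : V → ℕ)
    (hmemA : ∀ S : Finset V, ∑ v ∈ S, a v ≤ multigraphKappa ends S) {u : V}
    (hex : ∃ S : Finset V, u ∈ S ∧ ∑ v ∈ S, a v = multigraphKappa ends S) :
    ∃ T : Finset V, u ∈ T ∧ (∑ v ∈ T, a v = multigraphKappa ends T) ∧
      ∀ S : Finset V, u ∈ S → (∑ v ∈ S, a v = multigraphKappa ends S) → T ⊆ S := by
  classical
  set F : Finset (Finset V) :=
    univ.filter (fun S => u ∈ S ∧ ∑ v ∈ S, a v = multigraphKappa ends S) with hF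
  have hFne : F.Nonempty := by
    obtain ⟨S, h1, h2⟩ := hex
    exact ⟨S, by simp [hF, h1, h2]⟩
  obtain ⟨T, hT, hmin⟩ := F.exists_min_image (fun S => S.card) hFne
  rw [hF, mem_filter] at hT
  refine ⟨T, hT.2.1, hT.2.2, ?_⟩
  intro S hS1 hS2
  have hTS : T ∩ S ∈ F := by
    rw [hF, mem_filter]
    exact ⟨mem_univ _, Finset.mem_inter.2 ⟨hT.2.1, hS1⟩,
      tight_inter ends a hmemA hT.2.2 hS2⟩
  have hcard := hmin _ hTS
  have heq : T ∩ S = T :=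
    Finset.eq_of_subset_of_card_le Finset.inter_subset_left hcard
  exact Finset.inter_eq_left.1 heq

lemma exists_separating_tight (ends : E → Sym2 V) (a : V → ℕ)
    (hext : (fun v => (a v : ℝ)) ∈ Set.extremePoints ℝ (scorePolytope ends))
    {u w : V} (hu : 0 < a u) (hw : 0 < a w) (huw : u ≠ w) :
    ∃ S : Finset V, (∑ v ∈ S, a v = multigraphKappa ends S) ∧
      ((u ∈ S ∧ w ∉ S) ∨ (w ∈ S ∧ u ∉ S)) := by
  by_contra hcon
  push_neg at hcon
  have hmemA := (mem_scorePolytope_iff ends a).1 hext.1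
  have hslack : ∀ S : Finset V, ((u ∈ S ∧ w ∉ S) ∨ (w ∈ S ∧ u ∉ S)) →
      ∑ v ∈ S, a v + 1 ≤ multigraphKappa ends S := by
    intro S hS
    have h1 := hmemA S
    have h2 : ∑ v ∈ S, a v ≠ multigraphKappa ends S := by
      intro ht
      rcases hS with ⟨h3, h4⟩ | ⟨h3, h4⟩
      · exact h4 ((hcon S ht).1 h3)
      · exact h4 ((hcon S ht).2 h3)
    omega
  set y : V → ℝ := fun v => (a v : ℝ) + (if v = u then 1 else 0) - (if v = w then 1 else 0)
    with hy
  set z : V → ℝ := fun v => (a v : ℝ) - (if v = u then 1 else 0) + (if v = w then 1 else 0)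
    with hz
  have hcast : ∀ S : Finset V, ∑ v ∈ S, ((a v : ℝ)) = ((∑ v ∈ S, a v : ℕ) : ℝ) := by
    intro S; push_cast; rfl
  have hsy : ∀ S : Finset V, ∑ v ∈ S, y v =
      ((∑ v ∈ S, a v : ℕ) : ℝ) + (if u ∈ S then (1:ℝ) else 0) - (if w ∈ S then (1:ℝ) else 0) := by
    intro S
    rw [hy, Finset.sum_sub_distrib, Finset.sum_add_distrib, sum_indicator, sum_indicator,
      hcast]
  have hsz : ∀ S : Finset V, ∑ v ∈ S, z v =
      ((∑ v ∈ S, a v : ℕ) : ℝ) - (if u ∈ S then (1:ℝ) else 0) + (if w ∈ S then (1:ℝ) else 0) := by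
    intro S
    rw [hz, Finset.sum_add_distrib, Finset.sum_sub_distrib, sum_indicator, sum_indicator,
      hcast]
  have honeu : (1:ℝ) ≤ (a u : ℝ) := by exact_mod_cast hu
  have honew : (1:ℝ) ≤ (a w : ℝ) := by exact_mod_cast hw
  have hnonneg : ∀ v : V,
      (0:ℝ) ≤ (a v : ℝ) + (if v = u then 1 else 0) - (if v = w then 1 else 0) ∧
      (0:ℝ) ≤ (a v : ℝ) - (if v = u then 1 else 0) + (if v = w then 1 else 0) := by
    intro v
    have h0 : (0:ℝ) ≤ (a v : ℝ) := by positivity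
    by_cases hvu : v = u
    · rw [if_pos hvu, if_neg (by rw [hvu]; exact huw)]
      constructor <;> [linarith; (rw [hvu]; linarith)]
    · rw [if_neg hvu]
      by_cases hvw : v = w
      · rw [if_pos hvw]
        constructor <;> [(rw [hvw]; linarith); linarith]
      · rw [if_neg hvw]
        constructor <;> linarith
  have hbound : ∀ S : Finset V,
      ((∑ v ∈ S, a v : ℕ) : ℝ) + (if u ∈ S then (1:ℝ) else 0) - (if w ∈ S then (1:ℝ) else 0)
        ≤ (multigraphKappa ends S : ℝ) ∧
      ((∑ v ∈ S, a v : ℕ) : ℝ) - (if u ∈ S then (1:ℝ) else 0) + (if w ∈ S then (1:ℝ) else 0)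
        ≤ (multigraphKappa ends S : ℝ) := by
    intro S
    have h1 : ((∑ v ∈ S, a v : ℕ) : ℝ) ≤ (multigraphKappa ends S : ℝ) := by
      exact_mod_cast hmemA S
    by_cases hus : u ∈ S <;> by_cases hws : w ∈ S
    · rw [if_pos hus, if_pos hws]
      constructor <;> linarith
    · rw [if_pos hus, if_neg hws]
      have h2 : ((∑ v ∈ S, a v : ℕ) : ℝ) + 1 ≤ (multigraphKappa ends S : ℝ) := by
        exact_mod_cast hslack S (Or.inl ⟨hus, hws⟩)
      constructor <;> linarith
    · rw [if_neg hus, if_pos hws]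
      have h2 : ((∑ v ∈ S, a v : ℕ) : ℝ) + 1 ≤ (multigraphKappa ends S : ℝ) := by
        exact_mod_cast hslack S (Or.inr ⟨hws, hus⟩)
      constructor <;> linarith
    · rw [if_neg hus, if_neg hws]
      constructor <;> linarith
  have hyP : y ∈ scorePolytope ends := by
    constructor
    · intro v
      rw [hy]
      beta_reduce
      exact (hnonneg v).1
    · intro S
      rw [hsy]
      exact (hbound S).1
  have hzP : z ∈ scorePolytope ends := by
    constructor
    · intro v
      rw [hz]
      beta_reduce
      exact (hnonneg v).2
    · intro S
      rw [hsz]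
      exact (hbound S).2
  have hyne : y ≠ fun v => (a v : ℝ) := by
    intro h
    have := congrFun h u
    rw [hy] at this
    beta_reduce at this
    rw [if_pos rfl, if_neg huw, sub_zero] at this
    linarith
  exact midpoint_not_extreme ends a y z hyP hzP
    (fun v => by rw [hy, hz]; ring) hyne hext

lemma exists_singleton_tight (ends : E → Sym2 V) (a : V → ℕ)
    (hext : (fun v => (a v : ℝ)) ∈ Set.extremePoints ℝ (scorePolytope ends))
    {u₀ : V} (hu₀ : 0 < a u₀) :
    ∃ w : V, 0 < a w ∧ a w = multigraphKappa ends {w} := by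
  classical
  have hmemA := (mem_scorePolytope_iff ends a).1 hext.1
  suffices H : ∀ n : ℕ, ∀ u : V, ∀ T : Finset V, 0 < a u → u ∈ T →
      (∑ v ∈ T, a v = multigraphKappa ends T) →
      (∀ S : Finset V, u ∈ S → (∑ v ∈ S, a v = multigraphKappa ends S) → T ⊆ S) →
      T.card ≤ n → ∃ w : V, 0 < a w ∧ a w = multigraphKappa ends {w} by
    obtain ⟨S₀, hS₀⟩ := exists_tight_of_pos ends a hext hu₀
    obtain ⟨T, hT1, hT2, hT3⟩ := exists_min_tight ends a hmemA ⟨S₀, hS₀⟩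
    exact H T.card u₀ T hu₀ hT1 hT2 hT3 le_rfl
  intro n
  induction n with
  | zero =>
    intro u T hu huT _ _ hcard
    have : 0 < T.card := Finset.card_pos.2 ⟨u, huT⟩
    omega
  | succ n ih =>
    intro u T hu huT hTtight hTmin hcard
    by_cases hT1 : T.card ≤ 1
    · have hTeq : T = {u} := by
        have hpos : 0 < T.card := card_pos.2 ⟨u, huT⟩
        obtain ⟨x, hx⟩ := Finset.card_eq_one.1 (le_antisymm hT1 hpos)
        rw [hx] at huT ⊢
        rw [Finset.mem_singleton] at huT
        rw [huT]
      refine ⟨u, hu, ?_⟩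
      rw [hTeq, Finset.sum_singleton] at hTtight
      exact hTtight
    · push_neg at hT1
      obtain ⟨w, hwT, hwu⟩ := Finset.exists_mem_ne hT1 u
      have hw : 0 < a w := by
        by_contra h0
        push_neg at h0
        have haw : a w = 0 := by omega
        have hsum : ∑ v ∈ T.erase w, a v = ∑ v ∈ T, a v := Finset.sum_erase _ haw
        have h1 := kappa_mono ends (Finset.erase_subset w T)
        have h2 := hmemA (T.erase w)
        have htight' : ∑ v ∈ T.erase w, a v = multigraphKappa ends (T.erase w) := by omega
        have hsubset := hTmin (T.erase w)
          (Finset.mem_erase.2 ⟨fun h => hwu h.symm, huT⟩) htight'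
        exact Finset.notMem_erase w T (hsubset hwT)
      obtain ⟨S, hStight, hScase⟩ :=
        exists_separating_tight ends a hext hu hw (fun h => hwu h.symm)
      rcases hScase with ⟨huS, hwS⟩ | ⟨hwS, huS⟩
      · exact absurd (hTmin S huS hStight hwT) hwS
      · obtain ⟨M, hM1, hM2, hM3⟩ := exists_min_tight ends a hmemA ⟨S, hwS, hStight⟩
        have hMT : M ⊆ T := hM3 T hwT hTtight
        have huM : u ∉ M := fun h => huS (hM3 S hwS hStight h)
        have hlt : M.card < T.card :=
          Finset.card_lt_card ⟨hMT, fun hsub => huM (hsub huT)⟩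
        exact ih w M hw hM1 hM2 hM3 (by omega)

/-- Redirect all edges incident to `v₁` into loops at `v₁`. -/
noncomputable def redirect (ends : E → Sym2 V) (v₁ : V) : E → Sym2 V :=
  fun e => if v₁ ∈ ends e then s(v₁, v₁) else ends e

lemma kappa_redirect_le (ends : E → Sym2 V) (v₁ : V) (S : Finset V) :
    multigraphKappa (redirect ends v₁) S ≤ multigraphKappa ends S := by
  apply card_le_card
  intro e he
  rw [mem_filter] at he ⊢
  obtain ⟨h1, v, hvS, hve⟩ := he
  refine ⟨h1, ?_⟩
  rw [redirect] at hve
  by_cases hm : v₁ ∈ ends e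
  · rw [if_pos hm] at hve
    rcases Sym2.mem_iff.1 hve with rfl | rfl
    · exact ⟨v, hvS, hm⟩
    · exact ⟨v, hvS, hm⟩
  · rw [if_neg hm] at hve
    exact ⟨v, hvS, hve⟩

lemma kappa_redirect_insert (ends : E → Sym2 V) (v₁ : V) {T : Finset V} (hT : v₁ ∉ T) :
    multigraphKappa (redirect ends v₁) T + multigraphKappa ends {v₁} =
      multigraphKappa ends (insert v₁ T) := by
  classical
  set A : Finset E := univ.filter (fun e => v₁ ∈ ends e) with hA
  set B : Finset E := univ.filter (fun e => ∃ v ∈ T, v ∈ redirect ends v₁ e) with hB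
  have hBA : ∀ e ∈ B, v₁ ∉ ends e := by
    intro e he
    rw [hB, mem_filter] at he
    obtain ⟨-, v, hvT, hve⟩ := he
    intro hm
    rw [redirect, if_pos hm] at hve
    rcases Sym2.mem_iff.1 hve with rfl | rfl
    · exact hT hvT
    · exact hT hvT
  have hdisj : Disjoint B A := by
    rw [Finset.disjoint_left]
    intro e heB heA
    rw [hA, mem_filter] at heA
    exact hBA e heB heA.2
  have hunion : (univ.filter fun e : E => ∃ v ∈ insert v₁ T, v ∈ ends e) = B ∪ A := by
    ext e
    simp only [mem_filter, mem_univ, true_and, Finset.mem_union, hA, hB]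
    constructor
    · rintro ⟨v, hv, hve⟩
      rcases Finset.mem_insert.1 hv with rfl | hvT
      · exact Or.inr hve
      · by_cases hm : v₁ ∈ ends e
        · exact Or.inr hm
        · exact Or.inl ⟨v, hvT, by rw [redirect, if_neg hm]; exact hve⟩
    · rintro (⟨v, hvT, hve⟩ | h)
      · have hm : v₁ ∉ ends e := hBA e (by rw [hB, mem_filter]; exact ⟨mem_univ _, v, hvT, hve⟩)
        rw [redirect, if_neg hm] at hve
        exact ⟨v, Finset.mem_insert_of_mem hvT, hve⟩
      · exact ⟨v₁, Finset.mem_insert_self _ _, h⟩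
  have hAκ : multigraphKappa ends {v₁} = A.card := by
    rw [multigraphKappa, hA]
    congr 1
    apply filter_congr
    intro e _
    simp
  have hBκ : multigraphKappa (redirect ends v₁) T = B.card := rfl
  have hins : multigraphKappa ends (insert v₁ T) = (B ∪ A).card := by
    rw [multigraphKappa, hunion]
  rw [hBκ, hAκ, hins, Finset.card_union_of_disjoint hdisj]

lemma form_of_zero (ends : E → Sym2 V) (a : V → ℕ) (h : ∀ v, a v = 0) :
    ∃ (r : ℕ) (vs : Fin r → V), Function.Injective vs ∧
      (∀ i, a (vs i) = (Fset ends vs i).card) ∧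
      (∀ v, (∀ i, vs i ≠ v) → a v = 0) ∧ (∀ i, 0 < a (vs i)) :=
  ⟨0, Fin.elim0, fun i => i.elim0, fun i => i.elim0, fun v _ => h v, fun i => i.elim0⟩

lemma fwd (n : ℕ) : ∀ (ends : E → Sym2 V) (a : V → ℕ), (∑ v, a v) ≤ n →
    (fun v => (a v : ℝ)) ∈ Set.extremePoints ℝ (scorePolytope ends) →
    ∃ (r : ℕ) (vs : Fin r → V), Function.Injective vs ∧
      (∀ i, a (vs i) = (Fset ends vs i).card) ∧
      (∀ v, (∀ i, vs i ≠ v) → a v = 0) ∧ (∀ i, 0 < a (vs i)) := by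
  induction n with
  | zero =>
    intro ends a hsum _
    refine form_of_zero ends a fun v => ?_
    have h1 : a v ≤ ∑ v, a v := Finset.single_le_sum (fun v _ => Nat.zero_le _) (mem_univ v)
    omega
  | succ n ih =>
    intro ends a hsum hext
    by_cases h0 : ∀ v, a v = 0
    · exact form_of_zero ends a h0
    · push_neg at h0
      obtain ⟨u₀, hu₀⟩ := h0
      obtain ⟨v₁, hv₁pos, hv₁tight⟩ :=
        exists_singleton_tight ends a hext (Nat.pos_of_ne_zero hu₀)
      set nds : E → Sym2 V := redirect ends v₁ with hnds
      set a' : V → ℕ := Function.update a v₁ 0 with ha'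
      have ha'v : ∀ v, v ≠ v₁ → a' v = a v := fun v hv => Function.update_of_ne hv _ _
      have ha'v₁ : a' v₁ = 0 := Function.update_self _ _ _
      have hmemA := (mem_scorePolytope_iff ends a).1 hext.1
      have hsumerase : ∀ S : Finset V, ∑ v ∈ S, a' v = ∑ v ∈ S.erase v₁, a v := by
        intro S
        by_cases hvS : v₁ ∈ S
        · rw [← Finset.add_sum_erase S a' hvS, ha'v₁, zero_add]
          exact Finset.sum_congr rfl fun v hv => ha'v v (Finset.ne_of_mem_erase hv)
        · rw [Finset.erase_eq_of_notMem hvS]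
          exact Finset.sum_congr rfl fun v hv => ha'v v (fun h => hvS (by rw [← h]; exact hv))
      have hmemA' : ∀ S : Finset V, ∑ v ∈ S, a' v ≤ multigraphKappa nds S := by
        intro S
        rw [hsumerase S]
        have h3 := hmemA (insert v₁ (S.erase v₁))
        rw [Finset.sum_insert (Finset.notMem_erase _ _)] at h3
        have h4 := kappa_redirect_insert ends v₁ (Finset.notMem_erase v₁ S)
        rw [← hnds] at h4
        have h5 := kappa_mono nds (Finset.erase_subset v₁ S)
        omega
      have hext' : (fun v => (a' v : ℝ)) ∈ Set.extremePoints ℝ (scorePolytope nds) := by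
        refine ⟨(mem_scorePolytope_iff nds a').2 hmemA', ?_⟩
        intro y hy z hz hseg
        obtain ⟨t₁, t₂, ht₁, ht₂, hts, heq⟩ := hseg
        have hlift : ∀ x : V → ℝ, x ∈ scorePolytope nds →
            Function.update x v₁ ((multigraphKappa ends {v₁} : ℝ)) ∈ scorePolytope ends := by
          intro x hx
          constructor
          · intro v
            by_cases hv : v = v₁
            · subst hv
              rw [Function.update_self]
              positivity
            · rw [Function.update_of_ne hv]
              exact hx.1 v
          · intro S
            by_cases hvS : v₁ ∈ S
            · rw [← Finset.add_sum_erase S _ hvS, Function.update_self]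
              have h5 : ∑ v ∈ S.erase v₁, Function.update x v₁ ((multigraphKappa ends {v₁} : ℝ)) v
                  = ∑ v ∈ S.erase v₁, x v :=
                Finset.sum_congr rfl fun v hv => by
                  rw [Function.update_of_ne (Finset.ne_of_mem_erase hv)]
              rw [h5]
              have h6 := hx.2 (S.erase v₁)
              have h4 := kappa_redirect_insert ends v₁ (Finset.notMem_erase v₁ S)
              have h7 : insert v₁ (S.erase v₁) = S := Finset.insert_erase hvS
              have h8 : (multigraphKappa nds (S.erase v₁) : ℝ) + (multigraphKappa ends {v₁} : ℝ)
                  = (multigraphKappa ends S : ℝ) := by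
                rw [← hnds] at h4
                rw [h7] at h4
                exact_mod_cast h4
              linarith
            · have h5 : ∑ v ∈ S, Function.update x v₁ ((multigraphKappa ends {v₁} : ℝ)) v
                  = ∑ v ∈ S, x v :=
                Finset.sum_congr rfl fun v hv => by
                  rw [Function.update_of_ne (fun h => hvS (by rw [← h]; exact hv))]
              rw [h5]
              have h6 := hx.2 S
              have h7 : (multigraphKappa nds S : ℝ) ≤ (multigraphKappa ends S : ℝ) := by
                exact_mod_cast kappa_redirect_le ends v₁ S
              linarith
        have hyP := hlift y hy
        have hzP := hlift z hz
        have hseg2 : (fun v => (a v : ℝ)) ∈ openSegment ℝ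
            (Function.update y v₁ ((multigraphKappa ends {v₁} : ℝ)))
            (Function.update z v₁ ((multigraphKappa ends {v₁} : ℝ))) := by
          refine ⟨t₁, t₂, ht₁, ht₂, hts, ?_⟩
          funext v
          simp only [Pi.add_apply, Pi.smul_apply, smul_eq_mul]
          by_cases hv : v = v₁
          · rw [hv, Function.update_self, Function.update_self, hv₁tight]
            have : t₁ * ((multigraphKappa ends {v₁} : ℕ) : ℝ) +
                t₂ * ((multigraphKappa ends {v₁} : ℕ) : ℝ) =
                (t₁ + t₂) * ((multigraphKappa ends {v₁} : ℕ) : ℝ) := by ring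
            rw [this, hts, one_mul]
          · rw [Function.update_of_ne hv, Function.update_of_ne hv]
            have h8 := congrFun heq v
            simp only [Pi.add_apply, Pi.smul_apply, smul_eq_mul] at h8
            rw [h8]
            exact_mod_cast congrArg (fun m => ((m : ℕ) : ℝ)) (ha'v v hv)
        obtain hyeq := hext.2 hyP hzP hseg2
        have hfin : ∀ (s₁ s₂ : ℝ), 0 < s₁ → 0 < s₂ → ∀ (x : V → ℝ), x ∈ scorePolytope nds →
            (x' : V → ℝ) → x' ∈ scorePolytope nds →
            s₁ * x v₁ + s₂ * x' v₁ = 0 →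
            Function.update x v₁ ((multigraphKappa ends {v₁} : ℝ)) = (fun v => (a v : ℝ)) →
            x = fun v => (a' v : ℝ) := by
          intro s₁ s₂ hs₁ hs₂ x hx x' hx' hzero hupd
          funext v
          by_cases hv : v = v₁
          · have h01 : 0 ≤ x v₁ := hx.1 v₁
            have h02 : 0 ≤ x' v₁ := hx'.1 v₁
            have h04 : s₁ * x v₁ ≤ 0 := by nlinarith [mul_nonneg hs₂.le h02]
            have h05 : x v₁ ≤ 0 := by
              by_contra hpos
              push_neg at hpos
              nlinarith [mul_pos hs₁ hpos]
            have h06 : x v₁ = 0 := le_antisymm h05 h01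
            rw [hv, h06, ha'v₁]
            norm_num
          · have := congrFun hupd v
            rw [Function.update_of_ne hv] at this
            rw [this]
            exact_mod_cast (congrArg (fun m => ((m : ℕ) : ℝ)) (ha'v v hv)).symm
        have hzero1 : t₁ * y v₁ + t₂ * z v₁ = 0 := by
          have h8 := congrFun heq v₁
          simp only [Pi.add_apply, Pi.smul_apply, smul_eq_mul] at h8
          rw [h8, ha'v₁]
          norm_num
        have hzero2 : t₂ * z v₁ + t₁ * y v₁ = 0 := by linarith
        exact hfin t₁ t₂ ht₁ ht₂ y hy z hz hzero1 hyeq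
      have hsum' : ∑ v, a' v ≤ n := by
        have h1 : ∑ v, a v = a v₁ + ∑ v ∈ univ.erase v₁, a v :=
          (Finset.add_sum_erase univ a (mem_univ v₁)).symm
        have h2 := hsumerase univ
        omega
      obtain ⟨r', vs', hinj', hcount', hzero', hpos'⟩ := ih nds a' hsum' hext'
      have hv₁r : ∀ i, vs' i ≠ v₁ := by
        intro i h
        have := hpos' i
        rw [h, ha'v₁] at this
        omega
      refine ⟨r' + 1, Fin.cons v₁ vs', ?_, ?_, ?_, ?_⟩
      · rw [Fin.cons_injective_iff]
        exact ⟨fun ⟨i, hi⟩ => hv₁r i hi, hinj'⟩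
      · intro i
        refine Fin.cases ?_ ?_ i
        · have hF0 : Fset ends (Fin.cons v₁ vs') 0 =
              univ.filter (fun e : E => v₁ ∈ ends e) := by
            rw [Fset]
            apply filter_congr
            intro e _
            simp only [Fin.cons_zero]
            constructor
            · rintro ⟨u, hu, -⟩
              rw [hu]
              exact Sym2.mem_mk_left _ _
            · intro h
              obtain ⟨u, hu⟩ := Sym2.mem_iff_exists.1 h
              exact ⟨u, hu, fun j hj => absurd hj (Fin.not_lt_zero j)⟩
          rw [Fin.cons_zero, hF0]
          rw [hv₁tight, multigraphKappa]
          congr 1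
          apply filter_congr
          intro e _
          simp
        · intro k
          rw [Fin.cons_succ]
          rw [← ha'v (vs' k) (hv₁r k), hcount' k]
          rw [Fset, Fset]
          congr 1
          apply filter_congr
          intro e _
          constructor
          · rintro ⟨u, hu, hcond⟩
            have hne : v₁ ∉ ends e := by
              intro hmem
              rw [hnds, redirect, if_pos hmem] at hu
              rcases Sym2.eq_iff.1 hu with ⟨h1, -⟩ | ⟨-, h2⟩
              · exact hv₁r k h1.symm
              · exact hv₁r k h2.symm
            have hends : ends e = s(vs' k, u) := by
              rw [hnds, redirect, if_neg hne] at hu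
              exact hu
            have huv₁ : u ≠ v₁ := by
              intro h
              apply hne
              rw [hends, h]
              exact Sym2.mem_mk_right _ _
            refine ⟨u, by rw [Fin.cons_succ]; exact hends, ?_⟩
            intro j hj
            rcases Fin.eq_zero_or_eq_succ j with rfl | ⟨j', rfl⟩
            · rw [Fin.cons_zero]
              exact huv₁
            · rw [Fin.cons_succ]
              exact hcond j' (by rwa [Fin.succ_lt_succ_iff] at hj)
          · rintro ⟨u, hu, hcond⟩
            rw [Fin.cons_succ] at hu
            have huv₁ : u ≠ v₁ := by
              have := hcond 0 (Fin.succ_pos k)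
              rwa [Fin.cons_zero] at this
            have hne : v₁ ∉ ends e := by
              intro hmem
              rw [hu] at hmem
              rcases Sym2.mem_iff.1 hmem with h | h
              · exact hv₁r k h.symm
              · exact huv₁ h.symm
            refine ⟨u, ?_, ?_⟩
            · rw [hnds, redirect, if_neg hne]
              exact hu
            · intro j hj
              have := hcond j.succ (by rwa [Fin.succ_lt_succ_iff])
              rwa [Fin.cons_succ] at this
      · intro v hv
        have h1 : v₁ ≠ v := by
          have := hv 0
          rwa [Fin.cons_zero] at this
        have h2 : ∀ i, vs' i ≠ v := by
          intro i
          have := hv i.succ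
          rwa [Fin.cons_succ] at this
        have h3 := hzero' v h2
        rwa [ha'v v (fun h => h1 h.symm)] at h3
      · intro i
        refine Fin.cases ?_ ?_ i
        · rw [Fin.cons_zero]
          exact hv₁pos
        · intro k
          rw [Fin.cons_succ]
          have := hpos' k
          rwa [ha'v _ (hv₁r k)] at this

end Fwd

end ScoreAux

/-- A lattice point `a : V → ℕ` is an extreme point of the score vector polytope
if and only if there are pairwise distinct vertices `v_1, …, v_r` such that
`a (v i)` is the number of edges joining `v i` to a vertex outside
`{v_1, …, v_{i-1}}` (loops at `v i` counted once each), and `a` vanishes off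
`{v_1, …, v_r}`. -/
theorem extremePoint_scorePolytope_iff_ordered_form
    {V E : Type*} [Fintype V] [Fintype E] [DecidableEq V]
    (ends : E → Sym2 V) (a : V → ℕ) :
    (fun v => (a v : ℝ)) ∈ Set.extremePoints ℝ (scorePolytope ends) ↔
      ∃ (r : ℕ) (vs : Fin r → V), Function.Injective vs ∧
        (∀ i : Fin r, a (vs i) =
          (Finset.univ.filter fun e : E =>
            ∃ u : V, ends e = s(vs i, u) ∧ ∀ j : Fin r, j < i → u ≠ vs j).card) ∧
        (∀ v : V, (∀ i : Fin r, vs i ≠ v) → a v = 0) := by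
  constructor
  · intro hext
    obtain ⟨r, vs, hinj, hcount, hzero, -⟩ :=
      ScoreAux.fwd (∑ v, a v) ends a le_rfl hext
    refine ⟨r, vs, hinj, ?_, hzero⟩
    intro i
    rw [hcount i, ScoreAux.Fset]
  · rintro ⟨r, vs, hinj, hcount, hzero⟩
    refine ScoreAux.bwd ends a vs hinj ?_ hzero
    intro i
    rw [hcount i, ScoreAux.Fset]
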